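/- For all 2×2 matrices A and B with quaternion entries, the quartic q is multiplicative: q(A·B) = q(A)·q(B), where A·B is the usual matrix product in M₂(ℍ). -/

import Mathlib

/-- The quartic `q([[a,b],[c,d]]) = |a|²|d|² + |b|²|c|² − 2 Re(a c̄ d b̄)` of a `2 × 2`
quaternionic matrix. -/
noncomputable def quartic (A : Matrix (Fin 2) (Fin 2) (Quaternion ℝ)) : ℝ :=
  Quaternion.normSq (A 0 0) * Quaternion.normSq (A 1 1) +
    Quaternion.normSq (A 0 1) * Quaternion.normSq (A 1 0) -
    2 * (A 0 0 * star (A 1 0) * A 1 1 * star (A 0 1)).re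

open Matrix

noncomputable def cm (x : Quaternion ℝ) : Matrix (Fin 2) (Fin 2) ℂ :=
  !![⟨x.re, x.imI⟩, ⟨x.imJ, x.imK⟩; ⟨-x.imJ, x.imK⟩, ⟨x.re, -x.imI⟩]

lemma cm_mul (x y : Quaternion ℝ) : cm (x * y) = cm x * cm y := by
  ext i j
  fin_cases i <;> fin_cases j <;>
    · simp only [cm, Matrix.mul_apply, Fin.sum_univ_two, Matrix.cons_val', Matrix.cons_val_zero,
        Matrix.cons_val_one, Matrix.head_cons, Matrix.empty_val', Matrix.cons_val_fin_one,
        Matrix.head_fin_const, Quaternion.re_mul, Quaternion.imI_mul, Quaternion.imJ_mul,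
        Quaternion.imK_mul]
      apply Complex.ext <;> simp [Complex.mul_re, Complex.mul_im, Complex.ofReal_pow, Complex.ofReal_mul, Complex.ofReal_add, Complex.ofReal_sub, Complex.ofReal_re, Complex.ofReal_im, pow_two] <;> ring

lemma cm_add (x y : Quaternion ℝ) : cm (x + y) = cm x + cm y := by
  ext i j
  fin_cases i <;> fin_cases j <;>
    · simp [cm]
      apply Complex.ext <;> simp <;> ring

noncomputable def cM (A : Matrix (Fin 2) (Fin 2) (Quaternion ℝ)) :
    Matrix (Fin 2 ⊕ Fin 2) (Fin 2 ⊕ Fin 2) ℂ :=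
  Matrix.fromBlocks (cm (A 0 0)) (cm (A 0 1)) (cm (A 1 0)) (cm (A 1 1))

lemma cM_mul (A B : Matrix (Fin 2) (Fin 2) (Quaternion ℝ)) : cM (A * B) = cM A * cM B := by
  have e : ∀ i j : Fin 2, (A * B) i j = A i 0 * B 0 j + A i 1 * B 1 j := fun i j => by
    simp [Matrix.mul_apply, Fin.sum_univ_two]
  simp only [cM, Matrix.fromBlocks_multiply, e, cm_add, cm_mul]

lemma det_fin_four' {R : Type*} [CommRing R] (M : Matrix (Fin 4) (Fin 4) R) :
    M.det =
      M 0 0 * (M 1 1 * (M 2 2 * M 3 3 - M 2 3 * M 3 2) - M 1 2 * (M 2 1 * M 3 3 - M 2 3 * M 3 1)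
        + M 1 3 * (M 2 1 * M 3 2 - M 2 2 * M 3 1))
      - M 0 1 * (M 1 0 * (M 2 2 * M 3 3 - M 2 3 * M 3 2) - M 1 2 * (M 2 0 * M 3 3 - M 2 3 * M 3 0)
        + M 1 3 * (M 2 0 * M 3 2 - M 2 2 * M 3 0))
      + M 0 2 * (M 1 0 * (M 2 1 * M 3 3 - M 2 3 * M 3 1) - M 1 1 * (M 2 0 * M 3 3 - M 2 3 * M 3 0)
        + M 1 3 * (M 2 0 * M 3 1 - M 2 1 * M 3 0))
      - M 0 3 * (M 1 0 * (M 2 1 * M 3 2 - M 2 2 * M 3 1) - M 1 1 * (M 2 0 * M 3 2 - M 2 2 * M 3 0)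
        + M 1 2 * (M 2 0 * M 3 1 - M 2 1 * M 3 0)) := by
  rw [Matrix.det_succ_row_zero, Fin.sum_univ_four]
  simp (config := { decide := true }) [Matrix.det_fin_three, Matrix.submatrix_apply, Fin.succAbove, Fin.lt_def, show (Fin.succ 2 : Fin 4) = 3 from rfl, show (Fin.castSucc 2 : Fin 4) = 2 from rfl]
  ring

set_option maxHeartbeats 4000000 in
lemma det_cM (A : Matrix (Fin 2) (Fin 2) (Quaternion ℝ)) :
    (cM A).det = (quartic A : ℂ) := by
  rw [← Matrix.det_submatrix_equiv_self (finSumFinEquiv.symm : Fin (2+2) ≃ Fin 2 ⊕ Fin 2) (cM A),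
    det_fin_four']
  simp only [Matrix.submatrix_apply,
    show finSumFinEquiv.symm (0 : Fin (2+2)) = Sum.inl 0 from rfl,
    show finSumFinEquiv.symm (1 : Fin (2+2)) = Sum.inl 1 from rfl,
    show finSumFinEquiv.symm (2 : Fin (2+2)) = Sum.inr 0 from rfl,
    show finSumFinEquiv.symm (3 : Fin (2+2)) = Sum.inr 1 from rfl,
    cM, Matrix.fromBlocks_apply₁₁, Matrix.fromBlocks_apply₁₂, Matrix.fromBlocks_apply₂₁,
    Matrix.fromBlocks_apply₂₂, cm, Matrix.cons_val', Matrix.cons_val_zero, Matrix.cons_val_one,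
    Matrix.head_cons, Matrix.empty_val', Matrix.cons_val_fin_one, Matrix.head_fin_const]
  apply Complex.ext <;>
    simp [quartic, Quaternion.normSq_def', Quaternion.re_mul, Quaternion.re_star,
      Quaternion.imI_star, Quaternion.imJ_star, Quaternion.imK_star, Quaternion.imI_mul,
      Quaternion.imJ_mul, Quaternion.imK_mul, Complex.mul_re, Complex.mul_im, Complex.ofReal_pow, Complex.ofReal_mul, Complex.ofReal_add, Complex.ofReal_sub, Complex.ofReal_re, Complex.ofReal_im, pow_two] <;>
    ring

/-- The quartic `q` is multiplicative on `2 × 2` quaternionic matrices. -/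
theorem quartic_mul (A B : Matrix (Fin 2) (Fin 2) (Quaternion ℝ)) :
    quartic (A * B) = quartic A * quartic B := by
  have h : ((quartic (A * B) : ℝ) : ℂ) = (quartic A : ℂ) * (quartic B : ℂ) := by
    calc ((quartic (A * B) : ℝ) : ℂ) = (cM (A * B)).det := (det_cM _).symm
      _ = (cM A * cM B).det := by rw [cM_mul]
      _ = (cM A).det * (cM B).det := Matrix.det_mul _ _
      _ = (quartic A : ℂ) * (quartic B : ℂ) := by rw [det_cM, det_cM]
  exact_mod_cast h
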